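/- (Barbalat-type lemma) Let e : ℝ → ℝ be differentiable on [0, ∞) such that e and its derivative e' are bounded on [0, ∞), and suppose ∫₀^∞ e(t)² dt < ∞. Then e(t) → 0 as t → ∞. -/

import Mathlib

open MeasureTheory Filter

/-- Barbalat-type lemma: if `e` is differentiable on `[0, ∞)`, `e` and `e'` are bounded
on `[0, ∞)`, and `∫₀^∞ e(t)² dt < ∞`, then `e(t) → 0` as `t → ∞`. -/
theorem barbalat_l2 (e : ℝ → ℝ)
    (hdiff : ∀ t ≥ (0:ℝ), DifferentiableAt ℝ e t)
    (hbound : ∃ M : ℝ, ∀ t ≥ (0:ℝ), |e t| ≤ M ∧ |deriv e t| ≤ M)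
    (hL2 : IntegrableOn (fun t => e t ^ 2) (Set.Ici 0)) :
    Tendsto e atTop (nhds 0) := by
  obtain ⟨M, hM⟩ := hbound
  by_contra hne
  rw [Metric.tendsto_atTop] at hne
  push_neg at hne
  obtain ⟨ε, hε, hfreq⟩ := hne
  -- Lipschitz bound
  have hlip : ∀ s ≥ (0:ℝ), ∀ t ≥ (0:ℝ), |e s - e t| ≤ M * |s - t| := by
    intro s hs t ht
    have := Convex.norm_image_sub_le_of_norm_deriv_le (s := Set.Ici (0:ℝ))
      (fun x hx => hdiff x hx) (fun x hx => (hM x hx).2) (convex_Ici 0) ht hs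
    simpa [Real.norm_eq_abs] using this
  -- M > 0
  obtain ⟨t0, ht0, he0⟩ := hfreq 0
  have hMpos : 0 < M := lt_of_lt_of_le hε (by
    have := (hM t0 ht0).1
    calc ε ≤ dist (e t0) 0 := he0
    _ = |e t0| := by simp [Real.dist_eq]
    _ ≤ M := this)
  set δ : ℝ := ε / (2 * M) with hδdef
  have hδpos : 0 < δ := div_pos hε (by linarith)
  set c : ℝ := (ε / 2) ^ 2 * δ with hcdef
  have hcpos : 0 < c := mul_pos (by positivity) hδpos
  -- on [t, t+δ] with t hit point, e² ≥ (ε/2)²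
  have key : ∀ t ≥ (0:ℝ), ε ≤ |e t| →
      c ≤ ∫ s in t..(t + δ), e s ^ 2 := by
    intro t ht het
    have hint : IntervalIntegrable (fun s => e s ^ 2) volume t (t + δ) := by
      apply (hL2.mono_set _).intervalIntegrable
      rw [Set.uIcc_of_le (by linarith)]
      exact fun x hx => le_trans ht hx.1
    have hlow : ∀ s ∈ Set.Icc t (t + δ), (ε / 2) ^ 2 ≤ e s ^ 2 := by
      intro s hs
      have hs0 : (0:ℝ) ≤ s := le_trans ht hs.1
      have h1 : |e s - e t| ≤ M * |s - t| := hlip s hs0 t ht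
      have h2 : |s - t| ≤ δ := by
        rw [abs_of_nonneg (by linarith [hs.1])]
        linarith [hs.2]
      have h3 : |e s - e t| ≤ ε / 2 := by
        calc |e s - e t| ≤ M * |s - t| := h1
        _ ≤ M * δ := by nlinarith
        _ = ε / 2 := by rw [hδdef, mul_div_assoc', div_eq_div_iff (mul_pos two_pos hMpos).ne' two_ne_zero]; ring
      have h4 : ε / 2 ≤ |e s| := by
        have := abs_sub_abs_le_abs_sub (e t) (e s)
        rw [abs_sub_comm] at h3
        linarith
      calc (ε/2)^2 ≤ |e s| ^ 2 := by nlinarith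
      _ = e s ^ 2 := sq_abs _
    calc c = (ε/2)^2 * δ := hcdef
    _ = ∫ s in t..(t+δ), (ε/2)^2 := by
        rw [intervalIntegral.integral_const, smul_eq_mul]; ring
    _ ≤ ∫ s in t..(t + δ), e s ^ 2 := by
        apply intervalIntegral.integral_mono_on (by linarith) (by simp) hint
        exact hlow
  -- recursive sequence
  have hnext : ∀ x : ℝ, ∃ t ≥ max 0 x, ε ≤ |e t| := by
    intro x
    obtain ⟨t, ht, het⟩ := hfreq (max 0 x)
    exact ⟨t, ht, by simpa [Real.dist_eq] using het⟩
  choose next hnext1 hnext2 using hnext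
  let T : ℕ → ℝ := fun n => Nat.rec (next 0) (fun _ t => next (t + δ)) n
  have hT0 : ∀ n, 0 ≤ T n := by
    intro n; cases n with
    | zero => exact le_trans (le_max_left _ _) (hnext1 0)
    | succ k => exact le_trans (le_max_left _ _) (hnext1 _)
  have hTstep : ∀ n, T n + δ ≤ T (n + 1) := fun n =>
    le_trans (le_max_right _ _) (hnext1 (T n + δ))
  have hThit : ∀ n, ε ≤ |e (T n)| := by
    intro n; cases n with
    | zero => exact hnext2 0
    | succ k => exact hnext2 _
  -- integrability on [0, b] for b ≥ 0
  have hintOn : ∀ a b : ℝ, 0 ≤ a → IntervalIntegrable (fun s => e s ^ 2) volume a b ∨ True := fun _ _ _ => Or.inr trivial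
  have hII : ∀ a b : ℝ, 0 ≤ a → a ≤ b → IntervalIntegrable (fun s => e s ^ 2) volume a b := by
    intro a b ha hab
    apply (hL2.mono_set _).intervalIntegrable
    rw [Set.uIcc_of_le hab]
    exact fun x hx => le_trans ha hx.1
  have hF : ∀ n : ℕ, ((n : ℝ) + 1) * c ≤ ∫ s in (0:ℝ)..(T n + δ), e s ^ 2 := by
    intro n
    induction n with
    | zero =>
      have h1 := key (T 0) (hT0 0) (hThit 0)
      have hsplit : (∫ s in (0:ℝ)..(T 0 + δ), e s ^ 2)
          = (∫ s in (0:ℝ)..(T 0), e s ^ 2) + ∫ s in (T 0)..(T 0 + δ), e s ^ 2 := by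
        rw [intervalIntegral.integral_add_adjacent_intervals
          (hII 0 (T 0) le_rfl (hT0 0)) (hII (T 0) (T 0 + δ) (hT0 0) (by linarith [hδpos]))]
      have hnn : 0 ≤ ∫ s in (0:ℝ)..(T 0), e s ^ 2 :=
        intervalIntegral.integral_nonneg (hT0 0) (fun s _ => sq_nonneg _)
      rw [hsplit]; push_cast; linarith
    | succ k ih =>
      have h1 := key (T (k+1)) (hT0 (k+1)) (hThit (k+1))
      have hle : T k + δ ≤ T (k+1) := hTstep k
      have h0k : (0:ℝ) ≤ T k + δ := by linarith [hT0 k, hδpos]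
      have hsplit1 : (∫ s in (0:ℝ)..(T (k+1) + δ), e s ^ 2)
          = (∫ s in (0:ℝ)..(T k + δ), e s ^ 2) + ∫ s in (T k + δ)..(T (k+1) + δ), e s ^ 2 := by
        rw [intervalIntegral.integral_add_adjacent_intervals
          (hII 0 (T k + δ) le_rfl h0k)
          (hII (T k + δ) (T (k+1) + δ) h0k (by linarith [hδpos]))]
      have hsplit2 : (∫ s in (T k + δ)..(T (k+1) + δ), e s ^ 2)
          = (∫ s in (T k + δ)..(T (k+1)), e s ^ 2) + ∫ s in (T (k+1))..(T (k+1) + δ), e s ^ 2 := by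
        rw [intervalIntegral.integral_add_adjacent_intervals
          (hII (T k + δ) (T (k+1)) h0k hle)
          (hII (T (k+1)) (T (k+1) + δ) (hT0 (k+1)) (by linarith [hδpos]))]
      have hnn : 0 ≤ ∫ s in (T k + δ)..(T (k+1)), e s ^ 2 :=
        intervalIntegral.integral_nonneg hle (fun s _ => sq_nonneg _)
      rw [hsplit1, hsplit2]; push_cast at ih ⊢; linarith
  -- upper bound: F b ≤ I
  set I : ℝ := ∫ s in Set.Ici (0:ℝ), e s ^ 2 with hIdef
  have hFle : ∀ n, (∫ s in (0:ℝ)..(T n + δ), e s ^ 2) ≤ I := by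
    intro n
    have hb : (0:ℝ) ≤ T n + δ := by linarith [hT0 n, hδpos]
    rw [intervalIntegral.integral_of_le hb]
    apply setIntegral_mono_set hL2 (Filter.Eventually.of_forall fun s => sq_nonneg _)
    apply Filter.Eventually.of_forall
    exact fun x hx => le_of_lt hx.1
  obtain ⟨n, hn⟩ := exists_nat_gt (I / c)
  have h1 := hF n
  have h2 := hFle n
  have : I / c < (n:ℝ) + 1 := by linarith
  rw [div_lt_iff₀ hcpos] at this
  linarith
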